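/- If E is a finite-dimensional normed space over ℝ or ℂ with dim E ≥ 1, then no continuous linear operator on E is hypercyclic. -/

import Mathlib

open Filter Topology

/-- A continuous linear operator `T` is hypercyclic if some vector has dense orbit. -/
def Hypercyclic {𝕜 X : Type*} [Semiring 𝕜] [TopologicalSpace X] [AddCommMonoid X]
    [Module 𝕜 X] (T : X →L[𝕜] X) : Prop :=
  ∃ x : X, Dense (Set.range fun n : ℕ => (T ^ n) x)

/-- Kitai's theorem: no continuous linear operator on a nonzero finite-dimensional
normed space over `ℝ` or `ℂ` is hypercyclic. -/
theorem not_hypercyclic_of_finiteDimensional {𝕜 E : Type*} [RCLike 𝕜]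
    [NormedAddCommGroup E] [NormedSpace 𝕜 E] [FiniteDimensional 𝕜 E]
    (h : 1 ≤ Module.finrank 𝕜 E) (T : E →L[𝕜] E) : ¬Hypercyclic T := by
  classical
  rintro ⟨x, hx⟩
  set s : Set E := Set.range fun n : ℕ => (T ^ n) x with hs
  -- the span of the orbit is dense and closed, hence everything
  have hclosed : IsClosed (Submodule.span 𝕜 s : Set E) :=
    Submodule.closed_of_finiteDimensional _
  have hdense : Dense (Submodule.span 𝕜 s : Set E) :=
    hx.mono Submodule.subset_span
  have hspan : ⊤ ≤ Submodule.span 𝕜 s := by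
    intro y _
    have := hdense y
    rwa [hclosed.closure_eq] at this
  -- a basis made of orbit vectors
  let B := Module.Basis.ofSpan hspan
  haveI : Fintype ((linearIndepOn_empty 𝕜 id).extend (Set.empty_subset s)) :=
    FiniteDimensional.fintypeBasisIndex B
  have hmem : ∀ i, ∃ n : ℕ, (T ^ n) x = B i := by
    intro i
    have : B i ∈ s := Module.Basis.ofSpan_subset hspan (Set.mem_range_self i)
    exact this
  let N : _ → ℕ := fun i => (hmem i).choose
  have hN : ∀ i, (T ^ (N i)) x = B i := fun i => (hmem i).choose_spec
  set D : 𝕜 := LinearMap.det (T : E →ₗ[𝕜] E) with hD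
  set d : ℕ := Module.finrank 𝕜 E with hd
  let L : E → 𝕜 := fun y => B.det fun i => (T ^ (N i)) y
  have hLx : L x = 1 := by
    have : (fun i => (T ^ (N i)) x) = B := funext hN
    simp only [L, this]
    exact B.det_self
  have hLT : ∀ y, L (T y) = D * L y := by
    intro y
    have hcomm : (fun i => (T ^ (N i)) (T y))
        = (T : E →ₗ[𝕜] E) ∘ fun i => (T ^ (N i)) y := by
      funext i
      simp only [Function.comp_apply, ContinuousLinearMap.coe_coe]
      rw [← ContinuousLinearMap.mul_apply, ← pow_succ, pow_succ',
        ContinuousLinearMap.mul_apply]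
    simp only [L, hcomm, Module.Basis.det_comp, ← hD]
  have hOrb : ∀ n : ℕ, L ((T ^ n) x) = D ^ n := by
    intro n
    induction n with
    | zero => simpa using hLx
    | succ n ih =>
      have : (T ^ (n + 1)) x = T ((T ^ n) x) := by
        rw [pow_succ', ContinuousLinearMap.mul_apply]
      rw [this, hLT, ih, pow_succ']
  have hLcont : Continuous L := by
    have h1 : Continuous fun y => B.toMatrix fun i => (T ^ (N i)) y := by
      apply continuous_matrix
      intro i j
      simp only [Module.Basis.toMatrix_apply]
      exact ((B.coord i).continuous_of_finiteDimensional).comp (T ^ (N j)).continuous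
    have h2 : Continuous fun y => (B.toMatrix fun i => (T ^ (N i)) y).det :=
      h1.matrix_det
    simpa only [L, Module.Basis.det_apply] using h2
  have hcard : Fintype.card ((linearIndepOn_empty 𝕜 id).extend (Set.empty_subset s)) = d := by
    rw [hd, Module.finrank_eq_card_basis B]
  have hhom : ∀ t : 𝕜, L (t • x) = t ^ d := by
    intro t
    have h1 : (fun i => (T ^ (N i)) (t • x)) = fun i => t • ((T ^ (N i)) x) := by
      funext i; simp
    have h2 := B.det.toMultilinearMap.map_smul_univ (fun _ => t) (fun i => (T ^ (N i)) x)
    simp only [L, h1]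
    calc B.det (fun i => t • (T ^ (N i)) x)
        = (∏ _i : ((linearIndepOn_empty 𝕜 id).extend (Set.empty_subset s)), t) •
            B.det (fun i => (T ^ (N i)) x) := h2
      _ = t ^ d := by
          rw [Finset.prod_const, Finset.card_univ, hcard, smul_eq_mul]
          have : (fun i => (T ^ (N i)) x) = B := funext hN
          rw [this, B.det_self, mul_one]
  have key : ∀ t : 𝕜, t ^ d ∈ closure (Set.range fun n : ℕ => D ^ n) := by
    intro t
    have h1 : t • x ∈ closure s := hx _
    have h2 : L (t • x) ∈ L '' closure s := Set.mem_image_of_mem _ h1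
    have h3 : L (t • x) ∈ closure (L '' s) :=
      image_closure_subset_closure_image hLcont h2
    have h4 : L '' s = Set.range fun n : ℕ => D ^ n := by
      have hfun : (L ∘ fun n : ℕ => (T ^ n) x) = fun n : ℕ => D ^ n :=
        funext fun n => hOrb n
      rw [hs, ← Set.range_comp, hfun]
    rw [h4] at h3
    rwa [hhom] at h3
  have hd1 : d ≠ 0 := by omega
  rcases le_total ‖D‖ 1 with hD1 | hD1
  · -- all powers are in the closed unit ball, but ‖2 ^ d‖ > 1
    have hb : (Set.range fun n : ℕ => D ^ n) ⊆ Metric.closedBall (0 : 𝕜) 1 := by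
      rintro - ⟨n, rfl⟩
      simp only [Metric.mem_closedBall, dist_zero_right, norm_pow]
      exact pow_le_one₀ (norm_nonneg D) hD1
    have h2 : (2 : 𝕜) ^ d ∈ Metric.closedBall (0 : 𝕜) 1 :=
      closure_minimal hb Metric.isClosed_closedBall (key 2)
    simp only [Metric.mem_closedBall, dist_zero_right, norm_pow] at h2
    have : (1 : ℝ) < ‖(2 : 𝕜)‖ ^ d := by
      have : ‖(2 : 𝕜)‖ = 2 := by simp
      rw [this]
      exact one_lt_pow₀ one_lt_two hd1
    linarith
  · -- all powers have norm ≥ 1, but ‖(1/2) ^ d‖ < 1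
    have hb : (Set.range fun n : ℕ => D ^ n) ⊆ {z : 𝕜 | 1 ≤ ‖z‖} := by
      rintro - ⟨n, rfl⟩
      simp only [Set.mem_setOf_eq, norm_pow]
      exact one_le_pow₀ hD1
    have hcl : IsClosed {z : 𝕜 | 1 ≤ ‖z‖} := isClosed_le continuous_const continuous_norm
    have h2 : ((1 : 𝕜) / 2) ^ d ∈ {z : 𝕜 | 1 ≤ ‖z‖} :=
      closure_minimal hb hcl (key (1 / 2))
    simp only [Set.mem_setOf_eq, norm_pow] at h2
    have hlt : ‖(1 : 𝕜) / 2‖ ^ d < 1 := by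
      apply pow_lt_one₀ (norm_nonneg _) _ hd1
      rw [norm_div]
      simp
      norm_num
    linarith
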